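/- Let γ ≥ 3/2 and let ξ ~ Beta(1,γ). Then for every r ≥ 8, P(log((1+√ξ)/(1−√ξ)) > r^{1/3}/√γ) ≤ exp(−r^{1/3}/3). -/

import Mathlib

open MeasureTheory
open scoped ENNReal

noncomputable def betaOneGamma (γ : ℝ) : Measure ℝ :=
  volume.withDensity fun x =>
    ENNReal.ofReal (Set.indicator (Set.Icc (0 : ℝ) 1) (fun y => γ * (1 - y) ^ (γ - 1)) x)


lemma exp_le_aux {y : ℝ} (h0 : 0 ≤ y) (h1 : y ≤ 0.65) : Real.exp y ≤ 1 + 3 * y / 2 := by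
  have hb := Real.exp_bound' h0 (by linarith) (n := 3) (by norm_num)
  norm_num [Finset.sum_range_succ, Nat.factorial] at hb
  nlinarith [pow_nonneg h0 2, pow_nonneg h0 3]

lemma cosh_ge_aux (v : ℝ) : 1 + v ^ 2 / 2 ≤ Real.cosh v := by
  have h2 : Real.cosh (2 * (v / 2)) = Real.cosh (v / 2) ^ 2 + Real.sinh (v / 2) ^ 2 :=
    Real.cosh_two_mul _
  rw [show 2 * (v / 2) = v by ring, Real.cosh_sq] at h2
  have h1 : Real.cosh v = 1 + 2 * Real.sinh (v / 2) ^ 2 := by rw [h2]; ring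
  have hsq : (v / 2) ^ 2 ≤ Real.sinh (v / 2) ^ 2 := by
    rcases lt_trichotomy v 0 with hv | rfl | hv
    · have : -(v/2) < Real.sinh (-(v/2)) := Real.self_lt_sinh_iff.mpr (by linarith)
      rw [Real.sinh_neg] at this; nlinarith
    · simp
    · have : v / 2 < Real.sinh (v / 2) := Real.self_lt_sinh_iff.mpr (by linarith)
      nlinarith
  rw [h1]; nlinarith

lemma tanh_eq_aux (u : ℝ) : Real.tanh (u / 2) = (Real.exp u - 1) / (Real.exp u + 1) := by
  have ha : Real.exp (u / 2) * Real.exp (u / 2) = Real.exp u := by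
    rw [← Real.exp_add]; ring_nf
  have hne : (0:ℝ) < Real.exp (u / 2) := Real.exp_pos _
  rw [Real.tanh_eq_sinh_div_cosh, Real.sinh_eq, Real.cosh_eq, Real.exp_neg]
  rw [div_eq_div_iff (by positivity) (by positivity)]
  field_simp
  nlinarith [ha]

lemma rho_ge_two {r : ℝ} (hr : 8 ≤ r) : (2:ℝ) ≤ r ^ ((1:ℝ)/3) := by
  have h8 : (8:ℝ) ^ ((1:ℝ)/3) = 2 := by
    rw [show (8:ℝ) = 2 ^ (3:ℕ) by norm_num, ← Real.rpow_natCast 2 3,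
      ← Real.rpow_mul (by norm_num)]
    norm_num
  calc (2:ℝ) = (8:ℝ) ^ ((1:ℝ)/3) := h8.symm
    _ ≤ r ^ ((1:ℝ)/3) := Real.rpow_le_rpow (by norm_num) hr (by norm_num)

lemma key_ineq {γ r : ℝ} (hγ : 3/2 ≤ γ) (hr : 8 ≤ r) :
    (1 - Real.tanh (r ^ ((1:ℝ)/3) / Real.sqrt γ / 2) ^ 2) ^ γ ≤
      Real.exp (-(r ^ ((1:ℝ)/3)) / 3) := by
  have hγ0 : (0:ℝ) < γ := by linarith
  set ρ := r ^ ((1:ℝ)/3) with hρdef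
  have hρ2 : (2:ℝ) ≤ ρ := rho_ge_two hr
  have hsγ : 1 ≤ Real.sqrt γ := Real.one_le_sqrt.mpr (by linarith)
  have hsγsq : Real.sqrt γ * Real.sqrt γ = γ := Real.mul_self_sqrt hγ0.le
  set u := ρ / Real.sqrt γ with hudef
  have hu0 : 0 < u := by positivity
  set v := u / 2 with hvdef
  have hv0 : 0 < v := by positivity
  have hcv : (0:ℝ) < Real.cosh v := Real.cosh_pos v
  have h1mt : 1 - Real.tanh v ^ 2 = (Real.cosh v ^ 2)⁻¹ := by
    have h := Real.cosh_sq_sub_sinh_sq v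
    rw [Real.tanh_eq_sinh_div_cosh]
    field_simp
    exact h
  -- main : exp (ρ/(3*γ)) ≤ cosh v ^ 2
  have main : Real.exp (ρ / (3 * γ)) ≤ Real.cosh v ^ 2 := by
    by_cases hcase : 4 * Real.log 2 ≤ u
    · -- large u
      have he4 : (4:ℝ) ≤ Real.exp v := by
        have h24 : Real.exp (2 * Real.log 2) = 4 := by
          rw [show (2:ℝ) * Real.log 2 = Real.log 4 by
            rw [show (4:ℝ) = 2 ^ (2:ℕ) by norm_num, Real.log_pow]; push_cast; ring,
            Real.exp_log (by norm_num)]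
        calc (4:ℝ) = Real.exp (2 * Real.log 2) := h24.symm
          _ ≤ Real.exp v := Real.exp_le_exp.mpr (by rw [hvdef]; linarith)
      have hcosh : Real.exp v / 2 ≤ Real.cosh v := by
        rw [Real.cosh_eq]
        have := Real.exp_pos (-v)
        linarith
      have hd : ρ / (3 * γ) ≤ v := by
        rw [hvdef, hudef, div_div]
        apply div_le_div_of_nonneg_left (by linarith) (by positivity)
        nlinarith
      calc Real.exp (ρ / (3 * γ)) ≤ Real.exp v := Real.exp_le_exp.mpr hd
        _ ≤ Real.cosh v ^ 2 := by nlinarith [Real.exp_pos v]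
    · -- small u
      push_neg at hcase
      have hlog2 : Real.log 2 < 0.6931471808 := Real.log_two_lt_d9
      have hlog2' : (0:ℝ) < Real.log 2 := Real.log_pos (by norm_num)
      have hvlt : v < 2 * Real.log 2 := by rw [hvdef]; linarith
      have hy1 : v ^ 2 / 3 ≤ 0.65 := by nlinarith
      have hy0 : 0 ≤ v ^ 2 / 3 := by positivity
      have hexp : Real.exp (v ^ 2 / 3) ≤ Real.cosh v := by
        calc Real.exp (v ^ 2 / 3) ≤ 1 + 3 * (v ^ 2 / 3) / 2 := exp_le_aux hy0 hy1
          _ = 1 + v ^ 2 / 2 := by ring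
          _ ≤ Real.cosh v := cosh_ge_aux v
      have hsq : Real.exp (2 * (v ^ 2 / 3)) ≤ Real.cosh v ^ 2 := by
        rw [show 2 * (v ^ 2 / 3) = v ^ 2 / 3 + v ^ 2 / 3 by ring, Real.exp_add]
        nlinarith [Real.exp_pos (v ^ 2 / 3), (Real.exp_pos (v^2/3)).le]
      have husq : u ^ 2 = ρ ^ 2 / γ := by
        rw [hudef, div_pow, Real.sq_sqrt hγ0.le]
      have hd : ρ / (3 * γ) ≤ 2 * (v ^ 2 / 3) := by
        rw [hvdef]
        have : 2 * ((u/2) ^ 2 / 3) = u ^ 2 / 6 := by ring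
        rw [this, husq, div_div, div_le_div_iff₀ (by positivity) (by positivity)]
        have hρ0 : (0:ℝ) < ρ := by linarith
        nlinarith [mul_nonneg (mul_nonneg hγ0.le hρ0.le) (sub_nonneg.mpr hρ2)]
      exact (Real.exp_le_exp.mpr hd).trans hsq
  rw [h1mt]
  have hstep : (Real.cosh v ^ 2)⁻¹ ≤ Real.exp (-(ρ / (3 * γ))) := by
    rw [Real.exp_neg]
    exact inv_anti₀ (Real.exp_pos _) main
  calc (Real.cosh v ^ 2)⁻¹ ^ γ ≤ Real.exp (-(ρ / (3 * γ))) ^ γ :=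
        Real.rpow_le_rpow (by positivity) hstep hγ0.le
    _ = Real.exp (-(ρ / (3 * γ)) * γ) := (Real.exp_mul _ _).symm
    _ = Real.exp (-ρ / 3) := by congr 1; field_simp

theorem beta_log_tail_bound {Ω : Type*} [MeasurableSpace Ω] (ℙ : Measure Ω)
    [IsProbabilityMeasure ℙ] (γ : ℝ) (hγ : 3 / 2 ≤ γ) (X : Ω → ℝ) (hX : Measurable X)
    (hlaw : Measure.map X ℙ = betaOneGamma γ) (r : ℝ) (hr : 8 ≤ r) :
    ℙ {ω | r ^ ((1 : ℝ) / 3) / Real.sqrt γ <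
        Real.log ((1 + Real.sqrt (X ω)) / (1 - Real.sqrt (X ω)))} ≤
      ENNReal.ofReal (Real.exp (-(r ^ ((1 : ℝ) / 3)) / 3)) := by
  have hγ0 : (0:ℝ) < γ := by linarith
  set ρ := r ^ ((1:ℝ)/3) with hρdef
  have hρ2 : (2:ℝ) ≤ ρ := rho_ge_two hr
  have hsγ : 1 ≤ Real.sqrt γ := Real.one_le_sqrt.mpr (by linarith)
  set u := ρ / Real.sqrt γ with hudef
  have hu0 : 0 < u := by positivity
  set t := Real.tanh (u / 2) ^ 2 with htdef
  have htanh0 : 0 ≤ Real.tanh (u / 2) := by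
    rw [tanh_eq_aux]
    have := Real.one_le_exp hu0.le
    apply div_nonneg (by linarith) (by positivity)
  have htanh1 : Real.tanh (u / 2) < 1 := by
    rw [tanh_eq_aux]
    rw [div_lt_one (by positivity)]
    linarith
  have ht0 : 0 ≤ t := sq_nonneg _
  have ht1 : t < 1 := by rw [htdef]; nlinarith
  -- the tail set
  set S : Set ℝ := {x | u < Real.log ((1 + Real.sqrt x) / (1 - Real.sqrt x))} with hSdef
  have hmf : Measurable fun x : ℝ =>
      Real.log ((1 + Real.sqrt x) / (1 - Real.sqrt x)) :=
    Real.measurable_log.comp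
      ((measurable_const.add Real.continuous_sqrt.measurable).div
        (measurable_const.sub Real.continuous_sqrt.measurable))
  have hS : MeasurableSet S := measurableSet_lt measurable_const hmf
  -- set inclusion claim
  have claim : ∀ x : ℝ, x ∈ S → x ∈ Set.Icc (0:ℝ) 1 → x ∈ Set.Ioo t 1 := by
    intro x hxS ⟨hx0, hx1⟩
    rcases eq_or_lt_of_le hx1 with rfl | hx1'
    · exfalso
      simp only [hSdef, Set.mem_setOf_eq, Real.sqrt_one, sub_self, div_zero,
        Real.log_zero] at hxS
      linarith
    · have hs1 : Real.sqrt x < 1 := by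
        rw [show (1:ℝ) = Real.sqrt 1 by simp]
        exact Real.sqrt_lt_sqrt hx0 hx1'
      have hs0 : 0 ≤ Real.sqrt x := Real.sqrt_nonneg x
      have hpos : (0:ℝ) < 1 - Real.sqrt x := by linarith
      have hRpos : (0:ℝ) < (1 + Real.sqrt x) / (1 - Real.sqrt x) := by positivity
      have hmem : u < Real.log ((1 + Real.sqrt x) / (1 - Real.sqrt x)) := hxS
      have hexp : Real.exp u < (1 + Real.sqrt x) / (1 - Real.sqrt x) := by
        have := Real.exp_lt_exp.mpr hmem
        rwa [Real.exp_log hRpos] at this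
      rw [lt_div_iff₀ hpos] at hexp
      have htanhlt : Real.tanh (u / 2) < Real.sqrt x := by
        rw [tanh_eq_aux, div_lt_iff₀ (by positivity)]
        nlinarith
      constructor
      · rw [htdef]
        have := Real.sq_sqrt hx0
        nlinarith
      · exact hx1'
    -- rewrite probability via the law
  have hpre : {ω | u < Real.log ((1 + Real.sqrt (X ω)) / (1 - Real.sqrt (X ω)))}
      = X ⁻¹' S := rfl
  rw [hpre, ← Measure.map_apply hX hS, hlaw]
  rw [betaOneGamma, withDensity_apply _ hS]
  set f : ℝ → ℝ := fun y => γ * (1 - y) ^ (γ - 1) with hfdef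
  set g : ℝ → ℝ≥0∞ := fun x =>
    ENNReal.ofReal (Set.indicator (Set.Icc (0:ℝ) 1) f x) with hgdef
  have hmono : ∫⁻ x in S, g x ≤ ∫⁻ x in Set.Ioo t 1, g x := by
    rw [← lintegral_indicator hS g, ← lintegral_indicator measurableSet_Ioo g]
    apply lintegral_mono
    intro x
    by_cases hxS : x ∈ S
    · rw [Set.indicator_of_mem hxS]
      by_cases hxI : x ∈ Set.Ioo t 1
      · rw [Set.indicator_of_mem hxI]
      · rw [Set.indicator_of_notMem hxI]
        have hnot : x ∉ Set.Icc (0:ℝ) 1 := fun h => hxI (claim x hxS h)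
        simp [hgdef, Set.indicator_of_notMem hnot]
    · rw [Set.indicator_of_notMem hxS]
      exact zero_le'
  have hcong : ∫⁻ x in Set.Ioo t 1, g x
      = ∫⁻ x in Set.Ioo t 1, ENNReal.ofReal (f x) := by
    apply setLIntegral_congr_fun measurableSet_Ioo
    intro x hx
    rw [hgdef]
    simp only []
    rw [Set.indicator_of_mem (Set.mem_Icc.mpr ⟨le_of_lt (lt_of_le_of_lt ht0 hx.1),
      hx.2.le⟩)]
  -- integrability
  have hint : IntervalIntegrable f volume t 1 := by
    have h1 : IntervalIntegrable (fun x : ℝ => x ^ (γ - 1)) volume (1 - t) (1 - 1) :=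
      intervalIntegral.intervalIntegrable_rpow' (by linarith)
    have h2 := (h1.comp_sub_left 1)
    simp only [sub_sub_cancel] at h2
    exact (h2.const_mul γ)
  have hintOn : IntegrableOn f (Set.Ioo t 1) volume :=
    (intervalIntegrable_iff_integrableOn_Ioo_of_le ht1.le).mp hint
  have hnn : 0 ≤ᵐ[volume.restrict (Set.Ioo t 1)] f := by
    filter_upwards [ae_restrict_mem measurableSet_Ioo] with x hx
    have : (0:ℝ) ≤ 1 - x := by linarith [hx.2]
    exact mul_nonneg hγ0.le (Real.rpow_nonneg this _)
  have hval : ∫ x in t..1, f x = (1 - t) ^ γ := by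
    rw [hfdef]
    simp only []
    rw [intervalIntegral.integral_const_mul]
    have hcs := intervalIntegral.integral_comp_sub_left
      (a := t) (b := 1) (fun x : ℝ => x ^ (γ - 1)) 1
    simp only [sub_self] at hcs
    rw [hcs]
    rw [open intervalIntegral in integral_rpow (Or.inl (by linarith : (-1:ℝ) < γ - 1))]
    rw [Real.zero_rpow (by linarith), sub_zero]
    have : γ - 1 + 1 = γ := by ring
    rw [this]
    field_simp
  have hcompute : ∫⁻ x in Set.Ioo t 1, ENNReal.ofReal (f x)
      = ENNReal.ofReal ((1 - t) ^ γ) := by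
    rw [← ofReal_integral_eq_lintegral_ofReal hintOn hnn]
    congr 1
    rw [← MeasureTheory.integral_Ioc_eq_integral_Ioo,
      ← intervalIntegral.integral_of_le ht1.le]
    exact hval
  calc ∫⁻ x in S, g x ≤ ∫⁻ x in Set.Ioo t 1, g x := hmono
    _ = ENNReal.ofReal ((1 - t) ^ γ) := by rw [hcong, hcompute]
    _ ≤ ENNReal.ofReal (Real.exp (-ρ / 3)) := by
        apply ENNReal.ofReal_le_ofReal
        have := key_ineq hγ hr
        rw [htdef, hudef, hρdef]
        convert this using 2
    _ = ENNReal.ofReal (Real.exp (-ρ / 3)) := rfl
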